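/- Let A : M → ℂ^L be a linear map on an inner-product space M and let T ⊆ M be a subspace such that (1−δ)‖X‖² ≤ ‖A(X)‖² ≤ (1+δ)‖X‖² for all X ∈ T, with 0 ≤ δ < 1. Then ‖P_T − P_T ∘ A* ∘ A ∘ P_T‖ ≤ δ, where P_T is the orthogonal projection onto T and the norm is the operator norm on M. -/

import Mathlib

/-- If a linear map `A` on a finite-dimensional complex inner-product space satisfies the
`δ`-local isometry property on a subspace `T`, then `‖P_T − P_T A* A P_T‖ ≤ δ`. -/
theorem local_isometry_operator_bound
    {M F : Type*} [NormedAddCommGroup M] [InnerProductSpace ℂ M] [FiniteDimensional ℂ M]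
    [NormedAddCommGroup F] [InnerProductSpace ℂ F] [FiniteDimensional ℂ F]
    (A : M →L[ℂ] F) (T : Submodule ℂ M) (δ : ℝ) (hδ0 : 0 ≤ δ) (hδ1 : δ < 1)
    (hiso : ∀ X ∈ T, (1 - δ) * ‖X‖ ^ 2 ≤ ‖A X‖ ^ 2 ∧ ‖A X‖ ^ 2 ≤ (1 + δ) * ‖X‖ ^ 2) :
    ‖(T.subtypeL.comp (T.orthogonalProjection)) -
        ((T.subtypeL.comp (T.orthogonalProjection)).comp
          ((ContinuousLinearMap.adjoint A).comp
            (A.comp (T.subtypeL.comp (T.orthogonalProjection)))))‖ ≤ δ := by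
  set P : M →L[ℂ] M := T.subtypeL.comp (T.orthogonalProjection) with hPdef
  set B : M →L[ℂ] M :=
    P - P.comp ((ContinuousLinearMap.adjoint A).comp (A.comp P)) with hBdef
  show ‖B‖ ≤ δ
  have hPsa : IsSelfAdjoint P := isSelfAdjoint_starProjection T
  have hBsa : IsSelfAdjoint B := by
    have h2 : IsSelfAdjoint (P.comp ((ContinuousLinearMap.adjoint A).comp (A.comp P))) := by
      rw [IsSelfAdjoint, ContinuousLinearMap.star_eq_adjoint]
      simp only [ContinuousLinearMap.adjoint_comp, ContinuousLinearMap.adjoint_adjoint,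
        hPsa.adjoint_eq]
      exact ContinuousLinearMap.comp_assoc _ _ _
    exact hPsa.sub h2
  have hSym : (B : M →ₗ[ℂ] M).IsSymmetric :=
    ContinuousLinearMap.isSelfAdjoint_iff_isSymmetric.mp hBsa
  -- P fixes T and maps into T
  have hPmem : ∀ x : M, P x ∈ T := fun x => (T.orthogonalProjection x).2
  have hPfix : ∀ x ∈ T, P x = x := fun x hx =>
    T.starProjection_eq_self_iff.mpr hx
  set n := Module.finrank ℂ M with hn
  have hrank : Module.finrank ℂ M = n := rfl
  set b := hSym.eigenvectorBasis hrank with hb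
  set μ := hSym.eigenvalues hrank with hμ
  -- eigenvalue bound
  have hμbound : ∀ i, |μ i| ≤ δ := by
    intro i
    set v : M := b i with hv
    have hvnorm : ‖v‖ = 1 := b.orthonormal.1 i
    have hBv : B v = (μ i : ℂ) • v := hSym.apply_eigenvectorBasis hrank i
    by_cases hzero : μ i = 0
    · simp [hzero, hδ0]
    · -- v ∈ T
      have hBvT : B v ∈ T := by
        have : B v = P v - P ((ContinuousLinearMap.adjoint A) (A (P v))) := rfl
        rw [this]
        exact T.sub_mem (hPmem _) (hPmem _)
      have hvT : v ∈ T := by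
        rw [hBv] at hBvT
        have : (μ i : ℂ) ≠ 0 := by exact_mod_cast hzero
        exact (T.smul_mem_iff this).mp hBvT
      -- compute the eigenvalue
      have hPv : P v = v := hPfix v hvT
      have hinner : (inner ℂ (B v) v : ℂ) = 1 - (‖A v‖ : ℂ) ^ 2 := by
        have h1 : B v = v - P ((ContinuousLinearMap.adjoint A) (A v)) := by
          show P v - P ((ContinuousLinearMap.adjoint A) (A (P v))) = _
          rw [hPv]
        rw [h1, inner_sub_left]
        have h2 : (inner ℂ v v : ℂ) = 1 := by
          rw [inner_self_eq_norm_sq_to_K, hvnorm]; norm_num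
        have h3 : (inner ℂ (P ((ContinuousLinearMap.adjoint A) (A v))) v : ℂ)
            = inner ℂ (A v) (A v) := by
          rw [← hPsa.adjoint_eq, ContinuousLinearMap.adjoint_inner_left, hPv,
            ContinuousLinearMap.adjoint_inner_left]
        rw [h2, h3, inner_self_eq_norm_sq_to_K]
        norm_num
      have hinner2 : (inner ℂ (B v) v : ℂ) = (μ i : ℂ) := by
        rw [hBv, inner_smul_left]
        have h2 : (inner ℂ v v : ℂ) = 1 := by
          rw [inner_self_eq_norm_sq_to_K, hvnorm]; norm_num
        rw [h2]
        simp [Complex.conj_ofReal]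
      have hμeq : (μ i : ℂ) = 1 - (‖A v‖ : ℂ) ^ 2 := by rw [← hinner2, hinner]
      have hμreal : μ i = 1 - ‖A v‖ ^ 2 := by exact_mod_cast hμeq
      have hiso' := hiso v hvT
      rw [hvnorm] at hiso'
      simp only [one_pow, mul_one] at hiso'
      rw [abs_le]
      constructor <;> [linarith [hiso'.2]; linarith [hiso'.1]]
  -- operator norm bound
  apply ContinuousLinearMap.opNorm_le_bound B hδ0
  intro x
  have hsq : ‖B x‖ ^ 2 ≤ (δ * ‖x‖) ^ 2 := by
    rw [← b.repr.norm_map (B x), ← b.repr.norm_map x]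
    rw [EuclideanSpace.norm_eq, EuclideanSpace.norm_eq]
    rw [Real.sq_sqrt (by positivity)]
    rw [mul_pow, Real.sq_sqrt (by positivity), Finset.mul_sum]
    apply Finset.sum_le_sum
    intro i _
    have hrep : b.repr (B x) i = (μ i : ℂ) * b.repr x i := by
      exact_mod_cast hSym.eigenvectorBasis_apply_self_apply hrank x i
    rw [hrep, norm_mul, Complex.norm_real, mul_pow]
    have : ‖μ i‖ ^ 2 ≤ δ ^ 2 := by
      rw [Real.norm_eq_abs]
      exact pow_le_pow_left₀ (abs_nonneg _) (hμbound i) 2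
    nlinarith [sq_nonneg (‖b.repr x i‖), norm_nonneg (b.repr x i)]
  have h1 : 0 ≤ δ * ‖x‖ := by positivity
  nlinarith [norm_nonneg (B x)]
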